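/- Let Z_1,...,Z_{n+1} be exchangeable and almost surely distinct real random variables, and let Z_{(k)} be the k-th order statistic of Z_1,...,Z_n with k = ⌈(n+1)(1-α)⌉ ≤ n. Then P(Z_{n+1} ≤ Z_{(k)}) ≤ 1-α + 1/(n+1) (upper coverage bound for split conformal prediction). -/

import Mathlib

open MeasureTheory ProbabilityTheory Real Set

noncomputable def kthSmallest {n : ℕ} (v : Fin n → ℝ) (k : ℕ) : ℝ :=
  ((List.ofFn v : Multiset ℝ).sort (· ≤ ·)).getD (k-1) 0

namespace StmtAux


noncomputable def rk {m : ℕ} (x : Fin m → ℝ) (i : Fin m) : ℕ :=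
  (Finset.univ.filter (fun j => x j ≤ x i)).card

lemma rk_lt_rk {m : ℕ} {x : Fin m → ℝ} {i j : Fin m} (h : x i < x j) : rk x i < rk x j := by
  apply Finset.card_lt_card
  refine ⟨fun l hl => ?_, fun hsub => ?_⟩
  · simp only [Finset.mem_filter] at *
    exact ⟨hl.1, hl.2.trans h.le⟩
  · have := hsub (Finset.mem_filter.mpr ⟨Finset.mem_univ j, le_refl _⟩)
    simp only [Finset.mem_filter] at this
    exact absurd this.2 (not_le.mpr h)

lemma rk_inj {m : ℕ} {x : Fin m → ℝ} (hx : Function.Injective x) :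
    Function.Injective (rk x) := by
  intro i j h
  rcases lt_trichotomy (x i) (x j) with hlt | heq | hgt
  · exact absurd h (rk_lt_rk hlt).ne
  · exact hx heq
  · exact absurd h.symm (rk_lt_rk hgt).ne

lemma one_le_rk {m : ℕ} (x : Fin m → ℝ) (i : Fin m) : 1 ≤ rk x i :=
  Finset.card_pos.mpr ⟨i, Finset.mem_filter.mpr ⟨Finset.mem_univ i, le_refl _⟩⟩

lemma rk_le {m : ℕ} (x : Fin m → ℝ) (i : Fin m) : rk x i ≤ m := by
  simpa [rk] using Finset.card_filter_le Finset.univ (fun j => x j ≤ x i)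

lemma card_rk_le {m : ℕ} {x : Fin m → ℝ} (hx : Function.Injective x) {k : ℕ} (hk : k ≤ m) :
    (Finset.univ.filter (fun i => rk x i ≤ k)).card = k := by
  classical
  have hinj := rk_inj hx
  have himg : Finset.univ.image (rk x) = Finset.Icc 1 m := by
    apply Finset.eq_of_subset_of_card_le
    · intro a ha
      obtain ⟨i, -, rfl⟩ := Finset.mem_image.mp ha
      exact Finset.mem_Icc.mpr ⟨one_le_rk x i, rk_le x i⟩
    · rw [Finset.card_image_of_injective _ hinj, Nat.card_Icc]
      simp
  have h1 : (Finset.univ.filter (fun i => rk x i ≤ k)).card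
      = ((Finset.univ.image (rk x)).filter (fun a => a ≤ k)).card := by
    rw [Finset.filter_image, Finset.card_image_of_injective _ hinj]
  rw [h1, himg]
  have : (Finset.Icc 1 m).filter (fun a => a ≤ k) = Finset.Icc 1 k := by
    ext a
    simp only [Finset.mem_filter, Finset.mem_Icc]
    omega
  rw [this, Nat.card_Icc]
  omega



lemma card_filter_eq_countP (p : ℝ → Prop) [DecidablePred p] :
    ∀ {n : ℕ} (v : Fin n → ℝ),
      (Finset.univ.filter fun i => p (v i)).card = (List.ofFn v).countP (fun a => decide (p a)) := by
  intro n
  induction n with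
  | zero => intro v; simp
  | succ n ih =>
    intro v
    rw [List.ofFn_succ, List.countP_cons, ← ih (fun i => v i.succ)]
    rw [Finset.card_filter, Finset.card_filter, Fin.sum_univ_succ]
    by_cases hp : p (v 0) <;> simp [hp, add_comm]

lemma sorted_get_lt {s : List ℝ} (hs : s.Pairwise (· ≤ ·)) {t : ℝ} (i : Fin s.length)
    (h : (i : ℕ) < s.countP (fun a => decide (a < t))) : s.get i < t := by
  by_contra hnot
  push_neg at hnot
  have hsplit : s.countP (fun a => decide (a < t))
      = (s.take i).countP (fun a => decide (a < t)) + (s.drop i).countP (fun a => decide (a < t)) := by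
    conv_lhs => rw [← List.take_append_drop (i : ℕ) s]
    rw [List.countP_append]
  have hdrop : (s.drop i).countP (fun a => decide (a < t)) = 0 := by
    rw [List.countP_eq_zero]
    intro a ha
    obtain ⟨j, hj⟩ := List.mem_iff_get.mp ha
    have hlen : (i : ℕ) + (j : ℕ) < s.length := by
      have := j.2
      simp only [List.length_drop] at this
      omega
    have hget : (s.drop i).get j = s.get ⟨(i : ℕ) + (j : ℕ), hlen⟩ := by
      simp [List.getElem_drop]
    have hmono : s.get i ≤ s.get ⟨(i : ℕ) + (j : ℕ), hlen⟩ :=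
      hs.rel_get_of_le (by simp [Fin.le_def])
    rw [← hj, hget]
    simp only [decide_eq_true_eq]
    exact not_lt.mpr (le_trans hnot hmono)
  have htake : (s.take i).countP (fun a => decide (a < t)) ≤ (i : ℕ) := by
    calc (s.take i).countP (fun a => decide (a < t)) ≤ (s.take i).length :=
          List.countP_le_length
      _ ≤ (i : ℕ) := by simp [List.length_take]
  omega

lemma rk_last_le {n k : ℕ} (x : Fin (n+1) → ℝ) (hx : Function.Injective x)
    (hk1 : 1 ≤ k) (hkn : k ≤ n)
    (h : x (Fin.last n) ≤ kthSmallest (fun i : Fin n => x i.castSucc) k) :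
    rk x (Fin.last n) ≤ k := by
  classical
  set v : Fin n → ℝ := fun i => x i.castSucc with hv
  set t : ℝ := x (Fin.last n) with ht
  set s : List ℝ := (List.ofFn v : Multiset ℝ).sort (· ≤ ·) with hsdef
  have hlen : s.length = n := by
    simp [hsdef]
  have hsort : s.Pairwise (· ≤ ·) := Multiset.pairwise_sort _ _
  have hcount : s.countP (fun a => decide (a < t))
      = (Finset.univ.filter fun i => v i < t).card := by
    have h1 : (s : Multiset ℝ) = (List.ofFn v : Multiset ℝ) := Multiset.sort_eq _ _
    have h2 : s.countP (fun a => decide (a < t)) = (List.ofFn v).countP (fun a => decide (a < t)) := by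
      have := congrArg (Multiset.countP (fun a => a < t)) h1
      simpa [Multiset.coe_countP] using this
    rw [h2, card_filter_eq_countP (fun a => a < t) v]
  set c : ℕ := (Finset.univ.filter fun i => v i < t).card with hc
  have hck : c < k := by
    by_contra hle
    push_neg at hle
    have hklt : k - 1 < s.length := by omega
    have hget : s.get ⟨k-1, hklt⟩ < t := by
      apply sorted_get_lt hsort
      have hlt' : (k-1 : ℕ) < List.countP (fun a => decide (a < t)) s := by
        rw [hcount]; omega
      simpa using hlt'
    have hgetD : kthSmallest v k = s.get ⟨k-1, hklt⟩ := by
      rw [kthSmallest, ← hsdef, List.getD_eq_getElem _ _ (by omega), List.get_eq_getElem]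
    rw [hgetD] at h
    exact absurd (lt_of_le_of_lt h hget) (lt_irrefl t)
  -- rk x last = c + 1
  have hrk : rk x (Fin.last n) = c + 1 := by
    rw [rk, Finset.card_filter, Fin.sum_univ_castSucc, hc, Finset.card_filter]
    have hx1 : ∀ i : Fin n, (x i.castSucc ≤ t ↔ v i < t) := by
      intro i
      constructor
      · intro hle
        rcases lt_or_eq_of_le hle with h' | h'
        · exact h'
        · exact absurd (hx h') (Fin.ne_of_lt (Fin.castSucc_lt_last i))
      · exact fun h' => le_of_lt h'
    have : ∀ i : Fin n, (if x i.castSucc ≤ x (Fin.last n) then 1 else 0)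
        = (if v i < t then 1 else 0) := by
      intro i
      simp only [← ht]
      by_cases h' : v i < t
      · simp [h', (hx1 i).mpr h']
      · have hne : ¬ x i.castSucc ≤ t := fun hcc => h' ((hx1 i).mp hcc)
        simp [h', hne]
    simp only [this]
    simp
  omega

end StmtAux

/-- Upper coverage bound for split conformal prediction under a.s. distinct
exchangeable variables. -/
theorem stmt_3 {Ω : Type*} [MeasurableSpace Ω] (P : Measure Ω) [IsProbabilityMeasure P]
    (n : ℕ) (Z : Fin (n+1) → Ω → ℝ) (hmeas : ∀ i, Measurable (Z i))
    (hexch : ∀ σ : Equiv.Perm (Fin (n+1)),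
      Measure.map (fun ω i => Z (σ i) ω) P = Measure.map (fun ω i => Z i ω) P)
    (hdist : ∀ i j : Fin (n+1), i ≠ j → P {ω | Z i ω = Z j ω} = 0)
    (α : ℝ) (hα : α ∈ Set.Ioo (0:ℝ) 1)
    (k : ℕ) (hk : (k : ℤ) = ⌈((n:ℝ)+1)*(1-α)⌉) (hkn : k ≤ n) :
    P {ω | Z (Fin.last n) ω ≤ kthSmallest (fun i : Fin n => Z i.castSucc ω) k} ≤
      ENNReal.ofReal (1 - α + 1/((n:ℝ)+1)) := by
  classical
  obtain ⟨hα0, hα1⟩ := hα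
  have hk1 : 1 ≤ k := by
    have hpos : (0:ℝ) < ((n:ℝ)+1)*(1-α) := by nlinarith [Nat.cast_nonneg (α := ℝ) n]
    have : (0:ℤ) < ⌈((n:ℝ)+1)*(1-α)⌉ := Int.ceil_pos.mpr hpos
    omega
  set f : Ω → (Fin (n+1) → ℝ) := fun ω i => Z i ω with hfdef
  have hf : Measurable f := measurable_pi_lambda _ hmeas
  set μ := P.map f with hμdef
  have hμprob : IsProbabilityMeasure μ := Measure.isProbabilityMeasure_map hf.aemeasurable
  set B : Fin (n+1) → Set (Fin (n+1) → ℝ) := fun i => {x | StmtAux.rk x i ≤ k} with hBdef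
  have hrkmeas : ∀ i, Measurable fun x : Fin (n+1) → ℝ => StmtAux.rk x i := by
    intro i
    have hrw : (fun x : Fin (n+1) → ℝ => StmtAux.rk x i)
        = fun x => ∑ j : Fin (n+1), if x j ≤ x i then 1 else 0 :=
      funext fun x => Finset.card_filter _ _
    rw [hrw]
    exact Finset.measurable_sum _ fun j _ =>
      Measurable.ite (measurableSet_le (measurable_pi_apply j) (measurable_pi_apply i))
        measurable_const measurable_const
  have hB : ∀ i, MeasurableSet (B i) := by
    intro i
    exact (hrkmeas i) (measurableSet_Iic (a := k))
  set D : Set (Fin (n+1) → ℝ) := {x | Function.Injective x} with hDdef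
  have hDmeas : MeasurableSet D := by
    have : D = ⋂ (i) (j) (_ : i ≠ j), {x : Fin (n+1) → ℝ | x i = x j}ᶜ := by
      ext x
      simp only [hDdef, mem_setOf_eq, mem_iInter, mem_compl_iff, Function.Injective]
      constructor
      · intro hI i j hij hx; exact hij (hI hx)
      · intro hI i j hx
        by_contra hne
        exact hI i j hne hx
    rw [this]
    exact MeasurableSet.iInter fun i => MeasurableSet.iInter fun j => MeasurableSet.iInter
      fun _ => (measurableSet_eq_fun (measurable_pi_apply i) (measurable_pi_apply j)).compl
  have hDc : μ Dᶜ = 0 := by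
    have hsub : Dᶜ ⊆ ⋃ (i) (j) (_ : i ≠ j), {x : Fin (n+1) → ℝ | x i = x j} := by
      intro x hx
      simp only [hDdef, mem_compl_iff, mem_setOf_eq, Function.Injective, not_forall] at hx
      obtain ⟨i, j, hxij, hij⟩ := hx
      exact mem_iUnion.mpr ⟨i, mem_iUnion.mpr ⟨j, mem_iUnion.mpr ⟨hij, hxij⟩⟩⟩
    refine measure_mono_null hsub ?_
    refine measure_iUnion_null fun i => measure_iUnion_null fun j => measure_iUnion_null fun hij => ?_
    rw [hμdef, Measure.map_apply hf (measurableSet_eq_fun (measurable_pi_apply i) (measurable_pi_apply j))]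
    exact hdist i j hij
  have hμD : μ D = 1 := by
    have h := measure_add_measure_compl (μ := μ) hDmeas
    rw [hDc, add_zero] at h
    rw [h]; exact measure_univ
  -- exchangeability of μ
  have hmap : ∀ σ : Equiv.Perm (Fin (n+1)), μ.map (fun x => x ∘ σ) = μ := by
    intro σ
    have hg : Measurable fun x : Fin (n+1) → ℝ => x ∘ σ :=
      measurable_pi_lambda _ fun j => measurable_pi_apply _
    rw [hμdef, Measure.map_map hg hf]
    exact hexch σ
  have hpre : ∀ (σ : Equiv.Perm (Fin (n+1))) (m : Fin (n+1)),
      (fun x : Fin (n+1) → ℝ => x ∘ σ) ⁻¹' B m = B (σ m) := by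
    intro σ m
    ext x
    have : StmtAux.rk (x ∘ σ) m = StmtAux.rk x (σ m) := by
      unfold StmtAux.rk
      apply Finset.card_bij (fun j _ => σ j)
      · intro a ha
        simp only [Finset.mem_filter, Function.comp_apply] at *
        exact ⟨Finset.mem_univ _, ha.2⟩
      · intro a _ b _ hab
        exact σ.injective hab
      · intro b hb
        refine ⟨σ.symm b, ?_, by simp⟩
        simp only [Finset.mem_filter, Function.comp_apply, Equiv.apply_symm_apply] at *
        exact ⟨Finset.mem_univ _, hb.2⟩
    simp only [hBdef, Set.mem_preimage, Set.mem_setOf_eq, this]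
  have hBeq : ∀ i, μ (B i) = μ (B (Fin.last n)) := by
    intro i
    set σ := Equiv.swap i (Fin.last n) with hσ
    have hg : Measurable fun x : Fin (n+1) → ℝ => x ∘ σ :=
      measurable_pi_lambda _ fun j => measurable_pi_apply _
    have h1 : (fun x : Fin (n+1) → ℝ => x ∘ σ) ⁻¹' B (Fin.last n) = B i := by
      rw [hpre σ (Fin.last n), hσ, Equiv.swap_apply_right]
    calc μ (B i) = μ ((fun x : Fin (n+1) → ℝ => x ∘ σ) ⁻¹' B (Fin.last n)) := by rw [h1]
      _ = (μ.map (fun x => x ∘ σ)) (B (Fin.last n)) := (Measure.map_apply hg (hB _)).symm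
      _ = μ (B (Fin.last n)) := by rw [hmap σ]
  -- sum of measures
  have hcardB : ∀ x ∈ D, (Finset.univ.filter fun i => x ∈ B i).card = k := by
    intro x hx
    have := StmtAux.card_rk_le (x := x) hx (k := k) (by omega)
    simpa [hBdef] using this
  have hsum : ∑ i : Fin (n+1), μ (B i ∩ D) = k * μ D := by
    have hmeasBD : ∀ i : Fin (n+1), MeasurableSet (B i ∩ D) := fun i => (hB i).inter hDmeas
    calc ∑ i : Fin (n+1), μ (B i ∩ D)
        = ∑ i : Fin (n+1), ∫⁻ x, (B i ∩ D).indicator (fun _ => (1:ENNReal)) x ∂μ := by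
          refine Finset.sum_congr rfl fun i _ => ?_
          rw [lintegral_indicator (hmeasBD i)]
          simp
      _ = ∫⁻ x, ∑ i : Fin (n+1), (B i ∩ D).indicator (fun _ => (1:ENNReal)) x ∂μ := by
          rw [lintegral_finset_sum]
          intro i _
          exact measurable_const.indicator (hmeasBD i)
      _ = ∫⁻ x, D.indicator (fun _ => (k:ENNReal)) x ∂μ := by
          congr 1
          ext x
          by_cases hx : x ∈ D
          · have : ∀ i : Fin (n+1), (B i ∩ D).indicator (fun _ => (1:ENNReal)) x
                = if x ∈ B i then 1 else 0 := by
              intro i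
              by_cases hxB : x ∈ B i
              · simp [Set.indicator_of_mem (Set.mem_inter hxB hx), hxB]
              · simp [Set.indicator_of_notMem (fun hm : x ∈ B i ∩ D => hxB hm.1), hxB]
            simp only [this, Set.indicator_of_mem hx]
            rw [Finset.sum_boole, hcardB x hx]
          · have h0 : ∀ i : Fin (n+1), (B i ∩ D).indicator (fun _ => (1:ENNReal)) x = 0 :=
              fun i => Set.indicator_of_notMem (fun hm : x ∈ B i ∩ D => hx hm.2) _
            simp [h0, Set.indicator_of_notMem hx]
      _ = k * μ D := by
          rw [lintegral_indicator hDmeas]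
          simp [mul_comm]
  have hint : ∀ i, μ (B i ∩ D) = μ (B i) := by
    intro i
    refine le_antisymm (measure_mono Set.inter_subset_left) ?_
    calc μ (B i) ≤ μ ((B i ∩ D) ∪ Dᶜ) := by
          refine measure_mono fun y hy => ?_
          by_cases hD : y ∈ D
          · exact Or.inl ⟨hy, hD⟩
          · exact Or.inr hD
      _ ≤ μ (B i ∩ D) + μ Dᶜ := measure_union_le _ _
      _ = μ (B i ∩ D) := by rw [hDc, add_zero]
  have hlastval : ((n:ENNReal)+1) * μ (B (Fin.last n)) = k := by
    calc ((n:ENNReal)+1) * μ (B (Fin.last n))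
        = ∑ _i : Fin (n+1), μ (B (Fin.last n)) := by
          rw [Finset.sum_const, Finset.card_univ, Fintype.card_fin, nsmul_eq_mul]
          push_cast
          ring
      _ = ∑ i : Fin (n+1), μ (B i ∩ D) := by
          refine Finset.sum_congr rfl fun i _ => ?_
          rw [hint i, hBeq i]
      _ = k := by rw [hsum, hμD, mul_one]
  have hne : ((n:ENNReal)+1) ≠ 0 := by simp
  have hnetop : ((n:ENNReal)+1) ≠ ⊤ := by
    simp [ENNReal.add_ne_top, ENNReal.natCast_ne_top]
  have hμB : μ (B (Fin.last n)) = (k : ENNReal) / ((n:ENNReal)+1) := by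
    rw [ENNReal.eq_div_iff hne hnetop]
    exact hlastval
  have hev : {ω | Z (Fin.last n) ω ≤ kthSmallest (fun i : Fin n => Z i.castSucc ω) k}
      ⊆ f ⁻¹' (B (Fin.last n)) ∪ f ⁻¹' Dᶜ := by
    intro ω hω
    by_cases hD : f ω ∈ D
    · left
      show f ω ∈ B (Fin.last n)
      simp only [hBdef, Set.mem_setOf_eq]
      exact StmtAux.rk_last_le (f ω) hD hk1 hkn hω
    · right
      exact hD
  calc P {ω | Z (Fin.last n) ω ≤ kthSmallest (fun i : Fin n => Z i.castSucc ω) k}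
      ≤ P (f ⁻¹' (B (Fin.last n)) ∪ f ⁻¹' Dᶜ) := measure_mono hev
    _ ≤ P (f ⁻¹' (B (Fin.last n))) + P (f ⁻¹' Dᶜ) := measure_union_le _ _
    _ = μ (B (Fin.last n)) + μ Dᶜ := by
        rw [hμdef, Measure.map_apply hf (hB _), Measure.map_apply hf hDmeas.compl]
    _ = (k:ENNReal)/((n:ENNReal)+1) := by rw [hμB, hDc, add_zero]
    _ ≤ ENNReal.ofReal (1 - α + 1/((n:ℝ)+1)) := by
        have hpos : (0:ℝ) < (n:ℝ)+1 := by positivity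
        have hceil : (k:ℝ) < ((n:ℝ)+1)*(1-α) + 1 := by
          have h2 : ((⌈((n:ℝ)+1)*(1-α)⌉ : ℤ) : ℝ) < ((n:ℝ)+1)*(1-α) + 1 := by
            exact_mod_cast Int.ceil_lt_add_one _
          calc (k:ℝ) = ((k:ℤ):ℝ) := by push_cast; ring
            _ = ((⌈((n:ℝ)+1)*(1-α)⌉ : ℤ) : ℝ) := by rw [hk]
            _ < _ := h2
        have hreal : (k:ℝ)/((n:ℝ)+1) ≤ 1 - α + 1/((n:ℝ)+1) := by
          rw [div_le_iff₀ hpos]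
          have h1 : (1/((n:ℝ)+1))*((n:ℝ)+1) = 1 := by field_simp
          nlinarith [hceil, h1]
        have hcast : (k:ENNReal)/((n:ENNReal)+1) = ENNReal.ofReal ((k:ℝ)/((n:ℝ)+1)) := by
          rw [ENNReal.ofReal_div_of_pos hpos]
          congr 1
          · exact (ENNReal.ofReal_natCast k).symm
          · rw [show ((n:ℝ)+1) = ((n+1 : ℕ):ℝ) by push_cast; ring, ENNReal.ofReal_natCast]
            push_cast
            ring
        rw [hcast]
        exact ENNReal.ofReal_le_ofReal hreal
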